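/- Every natural number M > 1 has a unique representation as a tower exponentiation of a nonempty list of biprime numbers: such a list exists and any two such lists are equal. -/

import Mathlib

def Biprime (n : ℕ) : Prop := 1 < n ∧ ¬ ∃ a b : ℕ, 1 < a ∧ 1 < b ∧ a ^ b = n

def tower : List ℕ → ℕ
  | [] => 1
  | a :: l => a ^ tower l

lemma exists_pow_of_dvd_factorization (a n : ℕ) (ha : a ≠ 0) (hn : n ≠ 0)
    (h : ∀ p, n ∣ a.factorization p) : ∃ c, c ^ n = a := by
  refine ⟨Nat.floorRoot n a, Nat.eq_of_factorization_eq (pow_ne_zero _ (by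
    simp [Nat.floorRoot_ne_zero, ha, hn])) ha fun p => ?_⟩
  rw [Nat.factorization_pow, Finsupp.smul_apply, Nat.factorization_floorRoot]
  simp only [smul_eq_mul]
  exact Nat.mul_div_cancel' (h p)

lemma biprime_pow_eq {c k a : ℕ} (hA : Biprime a) (hk : 0 < k) (h : c ^ k = a) : k = 1 := by
  by_contra hk1
  have hk2 : 1 < k := lt_of_le_of_ne hk (Ne.symm hk1)
  have hc : 1 < c := by
    rcases Nat.lt_or_ge c 2 with h' | h'
    · interval_cases c
      · rw [Nat.zero_pow hk] at h; have := hA.1; omega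
      · rw [one_pow] at h; have := hA.1; omega
    · exact h' 
  exact hA.2 ⟨c, k, hc, hk2, h⟩

lemma key {a b m n : ℕ} (hA : Biprime a) (hB : Biprime b) (hm : 0 < m) (hn : 0 < n)
    (h : a ^ m = b ^ n) : a = b ∧ m = n := by
  have ha := hA.1
  have hb := hB.1
  set g := Nat.gcd m n with hg
  have hg0 : 0 < g := Nat.gcd_pos_of_pos_left n hm
  have hm' : m / g * g = m := Nat.div_mul_cancel (Nat.gcd_dvd_left m n)
  have hn' : n / g * g = n := Nat.div_mul_cancel (Nat.gcd_dvd_right m n)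
  have h' : a ^ (m / g) = b ^ (n / g) := by
    have hx : (a ^ (m / g)) ^ g = (b ^ (n / g)) ^ g := by
      rw [← pow_mul, ← pow_mul, hm', hn', h]
    exact Nat.pow_left_injective hg0.ne' hx
  have hcop : Nat.Coprime (m / g) (n / g) := Nat.coprime_div_gcd_div_gcd hg0
  have hm0 : 0 < m / g := Nat.div_pos (Nat.le_of_dvd hm (Nat.gcd_dvd_left m n)) hg0
  have hn0 : 0 < n / g := Nat.div_pos (Nat.le_of_dvd hn (Nat.gcd_dvd_right m n)) hg0
  -- for every prime p : (m/g) * v_p(a) = (n/g) * v_p(b)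
  have hfac : ∀ p, (m / g) * a.factorization p = (n / g) * b.factorization p := by
    intro p
    have := congrArg (fun x => x.factorization p) h'
    simpa [Nat.factorization_pow] using this
  have hdvd_a : ∀ p, (n / g) ∣ a.factorization p := fun p =>
    (Nat.Coprime.dvd_of_dvd_mul_left hcop.symm ⟨b.factorization p, (hfac p).symm ▸ rfl⟩)
  have hdvd_b : ∀ p, (m / g) ∣ b.factorization p := fun p =>
    (Nat.Coprime.dvd_of_dvd_mul_left hcop ⟨a.factorization p, (hfac p).symm⟩)
  obtain ⟨c, hc⟩ := exists_pow_of_dvd_factorization a (n / g) (by omega) hn0.ne' hdvd_a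
  obtain ⟨d, hd⟩ := exists_pow_of_dvd_factorization b (m / g) (by omega) hm0.ne' hdvd_b
  have hng : n / g = 1 := biprime_pow_eq hA hn0 hc
  have hmg : m / g = 1 := biprime_pow_eq hB hm0 hd
  have hmn : m = n := by
    have h1 : m = g := by rw [← hm', hmg, one_mul]
    have h2 : n = g := by rw [← hn', hng, one_mul]
    omega
  subst hmn
  exact ⟨Nat.pow_left_injective hm.ne' h, rfl⟩

lemma tower_pos (l : List ℕ) (h : ∀ a ∈ l, Biprime a) : 0 < tower l := by
  induction l with
  | nil => simp [tower]
  | cons a t ih =>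
    have ha := (h a (by simp)).1
    have ht := ih (fun x hx => h x (by simp [hx]))
    exact pow_pos (by omega) _

lemma tower_gt_one (l : List ℕ) (hne : l ≠ []) (h : ∀ a ∈ l, Biprime a) : 1 < tower l := by
  cases l with
  | nil => exact absurd rfl hne
  | cons a t =>
    have ha := (h a (by simp)).1
    have ht := tower_pos t (fun x hx => h x (by simp [hx]))
    calc 1 < a := ha
    _ = a ^ 1 := (pow_one a).symm
    _ ≤ a ^ tower t := Nat.pow_le_pow_right (by omega) ht
    _ = tower (a :: t) := rfl

lemma tower_unique : ∀ (l1 l2 : List ℕ), (∀ a ∈ l1, Biprime a) → (∀ a ∈ l2, Biprime a) →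
    tower l1 = tower l2 → l1 = l2 := by
  intro l1
  induction l1 with
  | nil =>
    intro l2 _ h2 heq
    cases l2 with
    | nil => rfl
    | cons b t2 =>
      have := tower_gt_one (b :: t2) (by simp) h2
      rw [← heq] at this
      simp [tower] at this
  | cons a t1 ih =>
    intro l2 h1 h2 heq
    cases l2 with
    | nil =>
      have := tower_gt_one (a :: t1) (by simp) h1
      rw [heq] at this
      simp [tower] at this
    | cons b t2 =>
      have hA : Biprime a := h1 a (by simp)
      have hB : Biprime b := h2 b (by simp)
      have ht1 := tower_pos t1 (fun x hx => h1 x (by simp [hx]))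
      have ht2 := tower_pos t2 (fun x hx => h2 x (by simp [hx]))
      obtain ⟨hab, hmn⟩ := key hA hB ht1 ht2 heq
      rw [hab, ih t2 (fun x hx => h1 x (by simp [hx])) (fun x hx => h2 x (by simp [hx])) hmn]

lemma exists_biprime_base : ∀ M, 1 < M → ∃ a k, Biprime a ∧ 0 < k ∧ a ^ k = M := by
  intro M
  induction M using Nat.strong_induction_on with
  | _ M ih =>
    intro hM
    by_cases hbp : Biprime M
    · exact ⟨M, 1, hbp, one_pos, pow_one M⟩
    · have : ∃ a b : ℕ, 1 < a ∧ 1 < b ∧ a ^ b = M := by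
        by_contra hc
        exact hbp ⟨hM, hc⟩
      obtain ⟨a, b, ha, hb, hab⟩ := this
      have haM : a < M := by
        calc a = a ^ 1 := (pow_one a).symm
        _ < a ^ b := Nat.pow_lt_pow_right ha hb
        _ = M := hab
      obtain ⟨c, k, hc, hk, hck⟩ := ih a haM ha
      exact ⟨c, k * b, hc, by positivity, by rw [pow_mul, hck, hab]⟩

lemma exists_tower : ∀ M, 1 < M → ∃ l : List ℕ, l ≠ [] ∧ (∀ a ∈ l, Biprime a) ∧ tower l = M := by
  intro M
  induction M using Nat.strong_induction_on with
  | _ M ih =>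
    intro hM
    obtain ⟨a, k, ha, hk, hak⟩ := exists_biprime_base M hM
    rcases eq_or_lt_of_le (show 1 ≤ k from hk) with h1 | h2
    · subst h1
      exact ⟨[a], by simp, by simpa using ha, by simpa [tower] using hak⟩
    · have hkM : k < M := by
        calc k < 2 ^ k := Nat.lt_two_pow_self
        _ ≤ a ^ k := Nat.pow_le_pow_left ha.1 k
        _ = M := hak
      obtain ⟨l, hlne, hlb, hlt⟩ := ih k hkM h2
      refine ⟨a :: l, by simp, ?_, by simp [tower, hlt, hak]⟩
      intro x hx
      rcases List.mem_cons.mp hx with rfl | hx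
      · exact ha
      · exact hlb x hx

theorem stmt4 (M : ℕ) (hM : 1 < M) :
    ∃! l : List ℕ, l ≠ [] ∧ (∀ a ∈ l, Biprime a) ∧ tower l = M := by
  obtain ⟨l, hl⟩ := exists_tower M hM
  refine ⟨l, hl, fun l' hl' => ?_⟩
  exact tower_unique l' l hl'.2.1 hl.2.1 (hl'.2.2.trans hl.2.2.symm)
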